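/- arXiv:2010.12541 — 2 statements merged into one kernel-verified Lean document; each statement's English description precedes it below -/
import Mathlib

section
/- Let u be C^1 on a neighborhood of the closed sector B = {(r cosθ, r sinθ) : 0 ≤ r ≤ l, 0 ≤ θ ≤ θ0} with 0 < θ0 ≤ π and l > 0. Then |∫_0^l u(r cosθ0, r sinθ0) dr − ∫_0^l u(r, 0) dr| ≤ ∫_B |∇u| dx dy. -/
open Set MeasureTheory Real

noncomputable section

/-- A point of the Euclidean plane given by its two coordinates. -/
def pt (x y : ℝ) : EuclideanSpace ℝ (Fin 2) := (WithLp.equiv 2 (Fin 2 → ℝ)).symm ![x, y]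

lemma pt_eq (x y : ℝ) : pt x y = x • pt 1 0 + y • pt 0 1 := by
  unfold pt; ext i; fin_cases i <;> simp

lemma norm_pt (x y : ℝ) : ‖pt x y‖ = Real.sqrt (x ^ 2 + y ^ 2) := by
  rw [EuclideanSpace.norm_eq]; congr 1
  simp [pt, Fin.sum_univ_two, sq_abs]

lemma Continuous.pt' {X : Type*} [TopologicalSpace X] {f g : X → ℝ}
    (hf : Continuous f) (hg : Continuous g) : Continuous fun x => pt (f x) (g x) := by
  have : (fun x => pt (f x) (g x)) = fun x => (f x) • pt 1 0 + (g x) • pt 0 1 := by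
    funext x; rw [← pt_eq]
  rw [this]; fun_prop

def emap : EuclideanSpace ℝ (Fin 2) ≃ᵐ ℝ × ℝ :=
  (MeasurableEquiv.toLp 2 (Fin 2 → ℝ)).symm.trans (MeasurableEquiv.finTwoArrow)

lemma emap_mp : MeasurePreserving emap volume volume :=
  (volume_preserving_finTwoArrow ℝ).comp (EuclideanSpace.volume_preserving_symm_measurableEquiv_toLp (Fin 2))

lemma emap_symm (x y : ℝ) : emap.symm (x, y) = pt x y := by
  ext i; fin_cases i <;> rfl

lemma emap_pt (x y : ℝ) : emap (pt x y) = (x, y) := rfl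

lemma hasDerivAt_gamma (r θ : ℝ) :
    HasDerivAt (fun t => pt (r * Real.cos t) (r * Real.sin t))
      (pt (-(r * Real.sin θ)) (r * Real.cos θ)) θ := by
  have h1 : HasDerivAt (fun t => r * Real.cos t) (-(r * Real.sin θ)) θ := by
    simpa [mul_comm] using (Real.hasDerivAt_cos θ).const_mul r
  have h2 : HasDerivAt (fun t => r * Real.sin t) (r * Real.cos θ) θ := by
    simpa [mul_comm] using (Real.hasDerivAt_sin θ).const_mul r
  have h := (h1.smul_const (pt 1 0)).add (h2.smul_const (pt 0 1))
  have he : (fun t => (r * Real.cos t) • pt 1 0 + (r * Real.sin t) • pt 0 1)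
      = fun t => pt (r * Real.cos t) (r * Real.sin t) := by
    funext t; rw [← pt_eq]
  rw [show ((fun y => (r * Real.cos y) • pt 1 0) + fun y => (r * Real.sin y) • pt 0 1) = fun t => pt (r * Real.cos t) (r * Real.sin t) from he] at h
  rwa [← pt_eq] at h

lemma polar_unique {l θ0 r θ : ℝ} (hθ0' : θ0 ≤ π) (hr : 0 < r) (hθ : θ ∈ Ioo (-π) π)
    {r' θ' : ℝ} (hr' : r' ∈ Icc 0 l) (hθ' : θ' ∈ Icc 0 θ0)
    (h1 : r * Real.cos θ = r' * Real.cos θ') (h2 : r * Real.sin θ = r' * Real.sin θ') :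
    r ≤ l ∧ 0 ≤ θ ∧ θ ≤ θ0 := by
  have hsq : r ^ 2 = r' ^ 2 := by
    have := congrArg (· ^ 2) h1
    have h2s := congrArg (· ^ 2) h2
    simp only [mul_pow] at this h2s
    nlinarith [Real.sin_sq_add_cos_sq θ, Real.sin_sq_add_cos_sq θ']
  have hrr' : r = r' := by nlinarith [hr'.1]
  subst hrr'
  have hcos : Real.cos θ = Real.cos θ' := mul_left_cancel₀ hr.ne' h1
  have hsin : Real.sin θ = Real.sin θ' := mul_left_cancel₀ hr.ne' h2
  have hθ'pi : θ' ∈ Icc 0 π := ⟨hθ'.1, hθ'.2.trans hθ0'⟩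
  have hsin' : 0 ≤ Real.sin θ := by
    rw [hsin]; exact Real.sin_nonneg_of_mem_Icc hθ'pi
  have hθ0le : 0 ≤ θ := by
    by_contra h
    push_neg at h
    have := Real.sin_neg_of_neg_of_neg_pi_lt h hθ.1
    linarith
  have : θ = θ' := Real.injOn_cos ⟨hθ0le, hθ.2.le⟩ hθ'pi hcos
  exact ⟨hr'.2, hθ0le, this ▸ hθ'.2⟩

lemma prodline_null (a : ℝ) : volume ((univ : Set ℝ) ×ˢ ({a} : Set ℝ)) = 0 := by
  rw [Measure.volume_eq_prod, Measure.prod_prod]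
  simp


/-- Rotation estimate: for `u` of class `C¹` on a neighborhood of the closed sector
`B = {(r cos θ, r sin θ) : 0 ≤ r ≤ l, 0 ≤ θ ≤ θ0}` with `0 < θ0 ≤ π` and `l > 0`,
`|∫_0^l u(r cos θ0, r sin θ0) dr − ∫_0^l u(r,0) dr| ≤ ∫_B |∇u|`. -/
theorem rotation_estimate (l θ0 : ℝ) (hl : 0 < l) (hθ0 : 0 < θ0) (hθ0' : θ0 ≤ π)
    (B : Set (EuclideanSpace ℝ (Fin 2)))
    (hB : B = {p | ∃ r ∈ Icc (0:ℝ) l, ∃ θ ∈ Icc (0:ℝ) θ0, p = pt (r * Real.cos θ) (r * Real.sin θ)})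
    (U : Set (EuclideanSpace ℝ (Fin 2))) (hU : IsOpen U) (hBU : B ⊆ U)
    (u : EuclideanSpace ℝ (Fin 2) → ℝ) (hu : ContDiffOn ℝ 1 u U) :
    |(∫ r in (0:ℝ)..l, u (pt (r * Real.cos θ0) (r * Real.sin θ0)))
        - ∫ r in (0:ℝ)..l, u (pt r 0)|
      ≤ ∫ p in B, ‖fderiv ℝ u p‖ := by
  -- basic notation
  set m : ℝ × ℝ → EuclideanSpace ℝ (Fin 2) :=
    fun q => pt (q.1 * Real.cos q.2) (q.1 * Real.sin q.2) with hm
  have hmc : Continuous m := (continuous_fst.mul (Real.continuous_cos.comp continuous_snd)).pt'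
    (continuous_fst.mul (Real.continuous_sin.comp continuous_snd))
  set K : Set (ℝ × ℝ) := Icc 0 l ×ˢ Icc 0 θ0 with hK
  have hKcomp : IsCompact K := isCompact_Icc.prod isCompact_Icc
  have hBm : B = m '' K := by
    rw [hB]; ext p
    constructor
    · rintro ⟨r, hr, θ, hθ, rfl⟩; exact ⟨(r, θ), ⟨hr, hθ⟩, rfl⟩
    · rintro ⟨⟨r, θ⟩, ⟨hr, hθ⟩, rfl⟩; exact ⟨r, hr, θ, hθ, rfl⟩
  have memB : ∀ q ∈ K, m q ∈ B := by intro q hq; rw [hBm]; exact ⟨q, hq, rfl⟩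
  have hGc : ContinuousOn (fderiv ℝ u) U := hu.continuousOn_fderiv_of_isOpen hU le_rfl
  have hdiff : ∀ p ∈ U, HasFDerivAt u (fderiv ℝ u p) p := fun p hp =>
    ((hu.contDiffAt (hU.mem_nhds hp)).differentiableAt one_ne_zero).hasFDerivAt
  have hmapsU : MapsTo m K U := fun q hq => hBU (memB q hq)
  -- the two integrands
  set φ : ℝ × ℝ → ℝ := fun q =>
    fderiv ℝ u (m q) (pt (-(q.1 * Real.sin q.2)) (q.1 * Real.cos q.2)) with hφ
  set h : ℝ × ℝ → ℝ := fun q => q.1 * ‖fderiv ℝ u (m q)‖ with hh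
  have hGmK : ContinuousOn (fun q => fderiv ℝ u (m q)) K := hGc.comp hmc.continuousOn hmapsU
  have hφK : ContinuousOn φ K := by
    apply hGmK.clm_apply
    exact (((continuous_fst.mul (Real.continuous_sin.comp continuous_snd)).neg.pt'
      (continuous_fst.mul (Real.continuous_cos.comp continuous_snd)))).continuousOn
  have hhK : ContinuousOn h K := continuous_fst.continuousOn.mul hGmK.norm
  set T2 : Set (ℝ × ℝ) := Ioc 0 l ×ˢ Ioc 0 θ0 with hT2
  have hT2sub : T2 ⊆ K := prod_mono Ioc_subset_Icc_self Ioc_subset_Icc_self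
  have hT2meas : MeasurableSet T2 := measurableSet_Ioc.prod measurableSet_Ioc
  have hφint : IntegrableOn φ T2 := (hφK.integrableOn_compact hKcomp).mono_set hT2sub
  have hhint : IntegrableOn h T2 := (hhK.integrableOn_compact hKcomp).mono_set hT2sub
  -- Step 1: FTC in θ for each r
  have key : ∀ r ∈ Icc (0:ℝ) l,
      u (pt (r * Real.cos θ0) (r * Real.sin θ0)) - u (pt r 0)
        = ∫ θ in (0:ℝ)..θ0, φ (r, θ) := by
    intro r hr
    have h0 : pt (r * Real.cos 0) (r * Real.sin 0) = pt r 0 := by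
      simp
    rw [← h0]
    refine (intervalIntegral.integral_eq_sub_of_hasDerivAt
      (f := fun t => u (pt (r * Real.cos t) (r * Real.sin t))) ?_ ?_).symm
    · intro t ht
      rw [uIcc_of_le hθ0.le] at ht
      have hp : m (r, t) ∈ U := hmapsU ⟨hr, ht⟩
      exact (hdiff _ hp).comp_hasDerivAt t (hasDerivAt_gamma r t)
    · apply ContinuousOn.intervalIntegrable
      rw [uIcc_of_le hθ0.le]
      exact hφK.comp (Continuous.continuousOn
        (continuous_const.prodMk continuous_id)) (fun t ht => ⟨hr, ht⟩)
  -- Step 2: rewrite LHS as a double integral over T2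
  have int1 : IntervalIntegrable (fun r => u (pt (r * Real.cos θ0) (r * Real.sin θ0)))
      volume 0 l := by
    apply ContinuousOn.intervalIntegrable
    rw [uIcc_of_le hl.le]
    exact (hu.continuousOn.comp hmc.continuousOn hmapsU).comp
      (Continuous.continuousOn (continuous_id.prodMk continuous_const))
      (fun r hr => ⟨hr, ⟨hθ0.le, le_refl θ0⟩⟩)
  have int2 : IntervalIntegrable (fun r => u (pt r 0)) volume 0 l := by
    apply ContinuousOn.intervalIntegrable
    rw [uIcc_of_le hl.le]
    have : (fun r : ℝ => u (pt r 0)) = fun r => u (m (r, 0)) := by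
      funext r; simp [hm]
    rw [this]
    exact (hu.continuousOn.comp hmc.continuousOn hmapsU).comp
      (Continuous.continuousOn (continuous_id.prodMk continuous_const))
      (fun r hr => ⟨hr, ⟨le_refl 0, hθ0.le⟩⟩)
  have eq1 : (∫ r in (0:ℝ)..l, u (pt (r * Real.cos θ0) (r * Real.sin θ0)))
        - ∫ r in (0:ℝ)..l, u (pt r 0)
      = ∫ q in T2, φ q := by
    rw [← intervalIntegral.integral_sub int1 int2]
    rw [intervalIntegral.integral_congr (g := fun r => ∫ θ in (0:ℝ)..θ0, φ (r, θ))
      (fun r hr => key r (by rwa [uIcc_of_le hl.le] at hr))]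
    rw [intervalIntegral.integral_of_le hl.le]
    have : (fun r => ∫ θ in (0:ℝ)..θ0, φ (r, θ)) = fun r => ∫ θ in Ioc 0 θ0, φ (r, θ) := by
      funext r; rw [intervalIntegral.integral_of_le hθ0.le]
    rw [this, hT2, Measure.volume_eq_prod]
    exact (setIntegral_prod φ (by rwa [← Measure.volume_eq_prod, ← hT2])).symm
  have habs : |∫ q in T2, φ q| ≤ ∫ q in T2, |φ q| := by
    simpa [Real.norm_eq_abs] using norm_integral_le_integral_norm (μ := volume.restrict T2) φ
  have hmono : ∫ q in T2, |φ q| ≤ ∫ q in T2, h q := by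
    apply setIntegral_mono_on hφint.abs hhint hT2meas
    intro q hq
    have hq1 : (0:ℝ) < q.1 := hq.1.1
    have hle : |φ q| ≤ ‖fderiv ℝ u (m q)‖
        * ‖pt (-(q.1 * Real.sin q.2)) (q.1 * Real.cos q.2)‖ := by
      simpa [Real.norm_eq_abs] using
        (fderiv ℝ u (m q)).le_opNorm (pt (-(q.1 * Real.sin q.2)) (q.1 * Real.cos q.2))
    have hnv : ‖pt (-(q.1 * Real.sin q.2)) (q.1 * Real.cos q.2)‖ = q.1 := by
      rw [norm_pt]
      have hsq : (-(q.1 * Real.sin q.2)) ^ 2 + (q.1 * Real.cos q.2) ^ 2 = q.1 ^ 2 := by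
        have := Real.sin_sq_add_cos_sq q.2; nlinarith
      rw [hsq, Real.sqrt_sq hq1.le]
    rw [hnv] at hle
    calc |φ q| ≤ ‖fderiv ℝ u (m q)‖ * q.1 := hle
    _ = h q := by rw [hh]; ring
  have hpolar : ∫ q in T2, h q = ∫ p in B, ‖fderiv ℝ u p‖ := by
    set mp : ℝ × ℝ → ℝ × ℝ := fun q => (q.1 * Real.cos q.2, q.1 * Real.sin q.2) with hmp
    have hmpc : Continuous mp := by fun_prop
    set B' : Set (ℝ × ℝ) := mp '' K with hB'
    have hB'comp : IsCompact B' := hKcomp.image hmpc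
    have hB'meas : MeasurableSet B' := hB'comp.measurableSet
    have hBimg : emap '' B = B' := by
      rw [hBm, hB', ← image_comp]
      rfl
    set g : ℝ × ℝ → ℝ := fun q => ‖fderiv ℝ u (emap.symm q)‖ with hg
    have step1 : ∫ p in B, ‖fderiv ℝ u p‖ = ∫ q in B', g q := by
      rw [← hBimg, emap_mp.setIntegral_image_emb emap.measurableEmbedding g B]
      simp only [hg, MeasurableEquiv.symm_apply_apply]
    have step2 : ∫ q in B', g q = ∫ q, B'.indicator g q := (integral_indicator hB'meas).symm
    have step3 : ∫ q, B'.indicator g q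
        = ∫ p in polarCoord.target, p.1 • (B'.indicator g) (polarCoord.symm p) :=
      (integral_comp_polarCoord_symm (B'.indicator g)).symm
    set T : Set (ℝ × ℝ) := Ioc 0 l ×ˢ (Icc 0 θ0 ∩ Ioo (-π) π) with hT
    have hTmeas : MeasurableSet T :=
      measurableSet_Ioc.prod (measurableSet_Icc.inter measurableSet_Ioo)
    have htarget : polarCoord.target = Ioi (0:ℝ) ×ˢ Ioo (-π) π := rfl
    have step4 : ∫ p in polarCoord.target, p.1 • (B'.indicator g) (polarCoord.symm p)
        = ∫ p in polarCoord.target, T.indicator h p := by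
      apply setIntegral_congr_fun polarCoord.open_target.measurableSet
      intro p hp
      dsimp only
      rw [htarget] at hp
      obtain ⟨hp1, hp2⟩ := hp
      have hsymm : polarCoord.symm p = mp p := rfl
      by_cases hmem : p ∈ T
      · have hmem' : polarCoord.symm p ∈ B' := by
          rw [hsymm, hB']
          exact ⟨p, ⟨Ioc_subset_Icc_self hmem.1, hmem.2.1⟩, rfl⟩
        rw [indicator_of_mem hmem', indicator_of_mem hmem]
        have hms : emap.symm (polarCoord.symm p) = m p := by
          rw [hsymm]
          simp only [hmp, hm]
          exact emap_symm _ _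
        simp only [hg, hh, smul_eq_mul, hms]
      · have hnot : polarCoord.symm p ∉ B' := by
          intro hc
          rw [hsymm, hB'] at hc
          obtain ⟨⟨r', θ'⟩, ⟨hr', hθ'⟩, heq⟩ := hc
          have h1 : p.1 * Real.cos p.2 = r' * Real.cos θ' := (congrArg Prod.fst heq).symm
          have h2 : p.1 * Real.sin p.2 = r' * Real.sin θ' := (congrArg Prod.snd heq).symm
          obtain ⟨hle', h0θ, hθθ0⟩ := polar_unique hθ0' hp1 hp2 hr' hθ' h1 h2
          exact hmem ⟨⟨hp1, hle'⟩, ⟨⟨h0θ, hθθ0⟩, hp2⟩⟩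
        rw [indicator_of_notMem hnot, indicator_of_notMem hmem, smul_zero]
    have hTsub : T ⊆ polarCoord.target := by
      rw [htarget]
      exact prod_mono Ioc_subset_Ioi_self inter_subset_right
    have step5 : ∫ p in polarCoord.target, T.indicator h p = ∫ p in T, h p := by
      rw [setIntegral_indicator hTmeas, inter_eq_self_of_subset_right hTsub]
    have hTae : T =ᵐ[volume] T2 := by
      rw [MeasureTheory.ae_eq_set]
      constructor
      · refine measure_mono_null ?_ (prodline_null 0)
        rintro ⟨a, b⟩ ⟨hmemT, hnot⟩
        obtain ⟨ha, ⟨hb1, hb2⟩, hb3⟩ := hmemT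
        have hb0 : ¬ (0 < b) := fun hb => hnot ⟨ha, hb, hb2⟩
        refine ⟨trivial, ?_⟩
        simp only [mem_singleton_iff]
        exact le_antisymm (not_lt.1 hb0) hb1
      · refine measure_mono_null ?_ (prodline_null π)
        rintro ⟨a, b⟩ ⟨hmemT2, hnot⟩
        obtain ⟨ha, hb1, hb2⟩ := hmemT2
        have hbIcc : b ∈ Icc 0 θ0 := ⟨hb1.le, hb2⟩
        have hbno : b ∉ Ioo (-π) π := fun hb => hnot ⟨ha, hbIcc, hb⟩
        have hbpi : ¬ (b < π) := fun hb =>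
          hbno ⟨by linarith [Real.pi_pos], hb⟩
        refine ⟨trivial, ?_⟩
        simp only [mem_singleton_iff]
        exact le_antisymm (hb2.trans hθ0') (not_lt.1 hbpi)
    have step6 : ∫ p in T, h p = ∫ p in T2, h p := setIntegral_congr_set hTae
    rw [step1, step2, step3, step4, step5, step6]
  rw [eq1, ← hpolar]
  exact habs.trans hmono
end
end

section
/- Let 0 < λ < 1, l > 0, a > 0, and let C be the closed trapezoid with vertices (0,0), (l,0), (0,a), (λl, a). For any u that is C^1 on a neighborhood of C, |(1/λ)∫_0^{λl} u(x,a) dx − ∫_0^l u(x,0) dx| ≤ (√(2 + l²/a²)/λ²) ∫_C |∇u| dx dy. -/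
open Set MeasureTheory Real

noncomputable section

lemma pt_add (x y x' y' : ℝ) : pt x y + pt x' y' = pt (x+x') (y+y') := by
  ext i; fin_cases i <;> simp [pt]

lemma pt_smul (r x y : ℝ) : r • pt x y = pt (r*x) (r*y) := by
  ext i; fin_cases i <;> simp [pt]

lemma pt_norm (x y : ℝ) : ‖pt x y‖ = Real.sqrt (x^2 + y^2) := by
  simp [pt, EuclideanSpace.norm_eq, Fin.sum_univ_two, sq_abs]

lemma cont_pt : Continuous (fun p : ℝ × ℝ => pt p.1 p.2) := by
  unfold pt
  refine (PiLp.continuousLinearEquiv 2 ℝ (fun _ : Fin 2 => ℝ)).symm.continuous.comp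
    (continuous_pi fun i => ?_)
  fin_cases i
  · exact continuous_fst
  · exact continuous_snd

def ψ : (ℝ × ℝ) ≃ᵐ EuclideanSpace ℝ (Fin 2) :=
  MeasurableEquiv.finTwoArrow.symm.trans (MeasurableEquiv.toLp 2 (Fin 2 → ℝ))

lemma ψ_eq : (⇑ψ) = fun p : ℝ × ℝ => pt p.1 p.2 := by
  funext p
  simp [ψ, pt, MeasurableEquiv.finTwoArrow, MeasurableEquiv.toLp]
  rfl

lemma ψ_mp : MeasurePreserving (fun p : ℝ × ℝ => pt p.1 p.2) volume volume := by
  rw [← ψ_eq]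
  exact ((EuclideanSpace.volume_preserving_symm_measurableEquiv_toLp (Fin 2)).symm _).comp
    ((volume_preserving_finTwoArrow ℝ).symm _)

lemma ψ_emb : MeasurableEmbedding (fun p : ℝ × ℝ => pt p.1 p.2) := by
  rw [← ψ_eq]; exact ψ.measurableEmbedding

lemma pt_coords (q : EuclideanSpace ℝ (Fin 2)) : pt (q 0) (q 1) = q := by
  ext i; fin_cases i <;> simp [pt]

def A (c : ℝ) (p : ℝ × ℝ) : ℝ × ℝ →L[ℝ] ℝ × ℝ :=
  ((1 - c*p.2) • ContinuousLinearMap.fst ℝ ℝ ℝ - (c*p.1) • ContinuousLinearMap.snd ℝ ℝ ℝ).prod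
    (ContinuousLinearMap.snd ℝ ℝ ℝ)

lemma hasfd (c : ℝ) (p : ℝ × ℝ) :
    HasFDerivAt (fun q : ℝ × ℝ => ((1 - c*q.2)*q.1, q.2)) (A c p) p := by
  have h1 : HasFDerivAt (fun q : ℝ × ℝ => (1 - c*q.2)*q.1)
      ((1 - c*p.2) • ContinuousLinearMap.fst ℝ ℝ ℝ - (c*p.1) • ContinuousLinearMap.snd ℝ ℝ ℝ) p := by
    have ha' : HasFDerivAt (fun q : ℝ × ℝ => 1 - c*q.2) (-(c • ContinuousLinearMap.snd ℝ ℝ ℝ)) p :=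
      (hasFDerivAt_snd.const_mul c).const_sub 1
    have heq : ((1 - c*p.2) • ContinuousLinearMap.fst ℝ ℝ ℝ - (c*p.1) • ContinuousLinearMap.snd ℝ ℝ ℝ)
        = ((1 - c*p.2) • ContinuousLinearMap.fst ℝ ℝ ℝ + p.1 • -(c • ContinuousLinearMap.snd ℝ ℝ ℝ)) :=
      ContinuousLinearMap.ext fun q => by simp; ring
    rw [heq]
    exact ha'.mul hasFDerivAt_fst
  exact h1.prodMk hasFDerivAt_snd

lemma abs_int_le {X : Type*} [MeasurableSpace X] (μ : MeasureTheory.Measure X) (f : X → ℝ) :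
    |∫ x, f x ∂μ| ≤ ∫ x, |f x| ∂μ := by
  simpa [Real.norm_eq_abs] using MeasureTheory.norm_integral_le_integral_norm (μ := μ) f

lemma detA (c : ℝ) (p : ℝ × ℝ) : (A c p).det = 1 - c * p.2 := by
  have h : (A c p).det = LinearMap.det ((A c p) : ℝ × ℝ →ₗ[ℝ] ℝ × ℝ) := rfl
  rw [h, ← LinearMap.det_toMatrix (Module.Basis.finTwoProd ℝ)]
  simp [-LinearMap.det_toMatrix, Matrix.det_fin_two, LinearMap.toMatrix_apply, Module.Basis.finTwoProd, A]

/-- Rescaling estimate: for `0 < λ < 1`, `l > 0`, `a > 0`, `C` the closed trapezoid with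
vertices `(0,0), (l,0), (0,a), (λl,a)`, and `u` of class `C¹` on a neighborhood of `C`:
`|(1/λ)∫_0^{λl} u(x,a) dx − ∫_0^l u(x,0) dx| ≤ (√(2 + l²/a²)/λ²) ∫_C |∇u|`. -/
theorem rescaling_estimate (lam l a : ℝ) (hlam0 : 0 < lam) (hlam1 : lam < 1)
    (hl : 0 < l) (ha : 0 < a)
    (C : Set (EuclideanSpace ℝ (Fin 2)))
    (hC : C = convexHull ℝ {pt 0 0, pt l 0, pt 0 a, pt (lam * l) a})
    (U : Set (EuclideanSpace ℝ (Fin 2))) (hU : IsOpen U) (hCU : C ⊆ U)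
    (u : EuclideanSpace ℝ (Fin 2) → ℝ) (hu : ContDiffOn ℝ 1 u U) :
    |(1 / lam) * (∫ x in (0:ℝ)..(lam * l), u (pt x a)) - ∫ x in (0:ℝ)..l, u (pt x 0)|
      ≤ (Real.sqrt (2 + l ^ 2 / a ^ 2) / lam ^ 2) * ∫ p in C, ‖fderiv ℝ u p‖ := by
  have ha' : (a:ℝ) ≠ 0 := ha.ne'
  set c : ℝ := (1 - lam)/a with hcdef
  have hc0 : 0 ≤ c := div_nonneg (by linarith) ha.le
  have hca : c * a = 1 - lam := div_mul_cancel₀ _ ha'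
  set K : ℝ := Real.sqrt (2 + l^2/a^2) with hKdef
  have hK0 : 0 ≤ K := Real.sqrt_nonneg _
  -- membership of the deformed points in the trapezoid
  have hmem : ∀ α ∈ Icc (0:ℝ) l, ∀ β ∈ Icc (0:ℝ) a, pt ((1 - c*β)*α) β ∈ C := by
    intro α hα β hβ
    rw [hC]
    have hconv : Convex ℝ (convexHull ℝ {pt 0 0, pt l 0, pt 0 a, pt (lam*l) a}) :=
      convex_convexHull ℝ _
    have h00 : pt 0 0 ∈ convexHull ℝ {pt 0 0, pt l 0, pt 0 a, pt (lam*l) a} :=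
      subset_convexHull ℝ _ (by simp)
    have hl0 : pt l 0 ∈ convexHull ℝ {pt 0 0, pt l 0, pt 0 a, pt (lam*l) a} :=
      subset_convexHull ℝ _ (by simp)
    have h0a : pt 0 a ∈ convexHull ℝ {pt 0 0, pt l 0, pt 0 a, pt (lam*l) a} :=
      subset_convexHull ℝ _ (by simp)
    have hla : pt (lam*l) a ∈ convexHull ℝ {pt 0 0, pt l 0, pt 0 a, pt (lam*l) a} :=
      subset_convexHull ℝ _ (by simp)
    have hs0 : 0 ≤ α/l := div_nonneg hα.1 hl.le
    have hs1 : α/l ≤ 1 := (div_le_one hl).2 hα.2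
    have ht0 : 0 ≤ β/a := div_nonneg hβ.1 ha.le
    have ht1 : β/a ≤ 1 := (div_le_one ha).2 hβ.2
    have hq1 : pt α 0 ∈ convexHull ℝ {pt 0 0, pt l 0, pt 0 a, pt (lam*l) a} := by
      have h := hconv h00 hl0 (by linarith : (0:ℝ) ≤ 1 - α/l) hs0 (by ring)
      have he : (1 - α/l) • pt 0 0 + (α/l) • pt l 0 = pt α 0 := by
        rw [pt_smul, pt_smul, pt_add]
        congr 1 <;> field_simp <;> ring
      rwa [he] at h
    have hq2 : pt (lam*α) a ∈ convexHull ℝ {pt 0 0, pt l 0, pt 0 a, pt (lam*l) a} := by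
      have h := hconv h0a hla (by linarith : (0:ℝ) ≤ 1 - α/l) hs0 (by ring)
      have he : (1 - α/l) • pt 0 a + (α/l) • pt (lam*l) a = pt (lam*α) a := by
        rw [pt_smul, pt_smul, pt_add,
          show (1 - α/l)*0 + (α/l)*(lam*l) = lam*α from by field_simp [hl.ne']; try ring,
          show (1 - α/l)*a + (α/l)*a = a from by ring]
      rwa [he] at h
    have h := hconv hq1 hq2 (by linarith : (0:ℝ) ≤ 1 - β/a) ht0 (by ring)
    have he : (1 - β/a) • pt α 0 + (β/a) • pt (lam*α) a = pt ((1 - c*β)*α) β := by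
      rw [pt_smul, pt_smul, pt_add]
      congr 1
      · rw [hcdef]; field_simp [ha', hl.ne'] <;> ring
      · field_simp <;> ring
    rwa [he] at h
  -- bounds on the Jacobian factor
  have hlb : ∀ β ∈ Icc (0:ℝ) a, lam ≤ 1 - c*β := by
    intro β hβ
    have : c*β ≤ c*a := mul_le_mul_of_nonneg_left hβ.2 hc0
    rw [hca] at this; linarith
  -- basic objects
  set e : ℝ × ℝ → EuclideanSpace ℝ (Fin 2) := (fun p => pt p.1 p.2) with hedef
  set g : ℝ × ℝ → ℝ × ℝ := (fun p => ((1 - c*p.2)*p.1, p.2)) with hgdef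
  set F : ℝ × ℝ → ℝ := (fun p => ‖fderiv ℝ u (e p)‖) with hFdef
  set R : Set (ℝ×ℝ) := Icc (0:ℝ) l ×ˢ Icc (0:ℝ) a with hRdef
  set s : Set (ℝ×ℝ) := Ioo (0:ℝ) l ×ˢ Ioo (0:ℝ) a with hsdef
  have hsR : s ⊆ R := prod_mono Ioo_subset_Icc_self Ioo_subset_Icc_self
  have hRcomp : IsCompact R := isCompact_Icc.prod isCompact_Icc
  have hsm : MeasurableSet s := measurableSet_Ioo.prod measurableSet_Ioo
  have hegR : ∀ p ∈ R, e (g p) ∈ C := fun p hp => hmem p.1 hp.1 p.2 hp.2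
  -- continuity facts
  have hDu : ContinuousOn (fderiv ℝ u) U := hu.continuousOn_fderiv_of_isOpen hU le_rfl
  have he_cont : Continuous e := cont_pt
  have hg_cont : Continuous g := by
    rw [hgdef]; fun_prop
  have hFG_cont : ContinuousOn (fun p => F (g p)) R := by
    apply ContinuousOn.norm
    exact hDu.comp (he_cont.comp hg_cont).continuousOn (fun p hp => hCU (hegR p hp))
  have hFGint : IntegrableOn (fun p => F (g p)) R := hFG_cont.integrableOn_compact hRcomp
  -- the trapezoid is compact
  have hCcomp : IsCompact C := by
    rw [hC]; exact (Set.toFinite _).isCompact_convexHull (𝕜 := ℝ)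
  have hCm : MeasurableSet C := hCcomp.isClosed.measurableSet
  -- preimage of C
  have hpre_eq : e ⁻¹' C = (fun q : EuclideanSpace ℝ (Fin 2) => (q 0, q 1)) '' C := by
    ext p
    constructor
    · intro hp
      refine ⟨e p, hp, ?_⟩
      simp [hedef, pt]
    · rintro ⟨q, hq, rfl⟩
      have : e (q 0, q 1) = q := pt_coords q
      simpa [this] using hq
  have hpreC_comp : IsCompact (e ⁻¹' C) := by
    rw [hpre_eq]
    exact hCcomp.image (by fun_prop)
  have hFC_cont : ContinuousOn F (e ⁻¹' C) :=
    (hDu.comp he_cont.continuousOn (fun p hp => hCU hp)).norm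
  have hFintC : IntegrableOn F (e ⁻¹' C) := hFC_cont.integrableOn_compact hpreC_comp
  have hFnn : ∀ p, 0 ≤ F p := fun p => norm_nonneg _
  -- transfer the integral over C to ℝ²
  have htrans : ∫ p in e ⁻¹' C, F p = ∫ p in C, ‖fderiv ℝ u p‖ := by
    rw [hFdef, hedef]
    exact ψ_mp.setIntegral_preimage_emb ψ_emb (fun y => ‖fderiv ℝ u y‖) C
  -- change of variables
  have hginj : InjOn g s := by
    intro p hp q hq h
    have h2 : p.2 = q.2 := by
      have := congrArg Prod.snd h
      simpa [hgdef] using this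
    have h1 : (1 - c*p.2)*p.1 = (1 - c*q.2)*q.1 := by
      have := congrArg Prod.fst h
      simpa [hgdef] using this
    have hpos : 0 < 1 - c*p.2 := lt_of_lt_of_le hlam0 (hlb p.2 (Ioo_subset_Icc_self hp.2))
    rw [← h2] at h1
    have := mul_left_cancel₀ hpos.ne' h1
    exact Prod.ext this h2
  have hcov : ∫ p in g '' s, F p = ∫ p in s, |(A c p).det| • F (g p) := by
    rw [hgdef]
    exact integral_image_eq_integral_abs_det_fderiv_smul volume hsm
      (fun p _ => (hasfd c p).hasFDerivWithinAt) (hgdef ▸ hginj) F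
  have hdetF_int : IntegrableOn (fun p => |(A c p).det| • F (g p)) s := by
    have hc1 : Continuous (fun p : ℝ × ℝ => |1 - c*p.2|) := by fun_prop
    have hcont : ContinuousOn (fun p : ℝ × ℝ => |1 - c*p.2| * F (g p)) R :=
      ContinuousOn.mul (hc1.continuousOn) hFG_cont
    have := (hcont.integrableOn_compact (μ := volume) hRcomp).mono_set hsR
    simpa [detA, smul_eq_mul] using this
  have hstep1 : lam * ∫ p in s, F (g p) ≤ ∫ p in g '' s, F p := by
    rw [hcov, ← MeasureTheory.integral_const_mul]
    apply setIntegral_mono_on ((hFGint.mono_set hsR).const_mul lam) hdetF_int hsm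
    intro p hp
    rw [detA, smul_eq_mul]
    have hlam_le : lam ≤ 1 - c*p.2 := hlb p.2 (Ioo_subset_Icc_self hp.2)
    rw [abs_of_pos (lt_of_lt_of_le hlam0 hlam_le)]
    exact mul_le_mul_of_nonneg_right hlam_le (hFnn _)
  have hsub : g '' s ⊆ e ⁻¹' C := by
    rintro _ ⟨p, hp, rfl⟩
    exact hegR p (hsR hp)
  have hstep2 : ∫ p in g '' s, F p ≤ ∫ p in e ⁻¹' C, F p :=
    setIntegral_mono_set hFintC (Filter.Eventually.of_forall hFnn)
      (HasSubset.Subset.eventuallyLE hsub)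
  have hIC_nn : (0:ℝ) ≤ ∫ p in C, ‖fderiv ℝ u p‖ :=
    setIntegral_nonneg hCm fun p _ => norm_nonneg _
  have hkey : ∫ p in s, F (g p) ≤ (1/lam) * ∫ p in C, ‖fderiv ℝ u p‖ := by
    have h := (hstep1.trans hstep2)
    rw [htrans] at h
    have h2 := mul_le_mul_of_nonneg_left h (le_of_lt (one_div_pos.mpr hlam0))
    rwa [← mul_assoc, one_div_mul_cancel hlam0.ne', one_mul] at h2
  -- Fubini
  have hvol : (volume : Measure (ℝ×ℝ)) = (volume : Measure ℝ).prod volume :=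
    Measure.volume_eq_prod ℝ ℝ
  have hFub : ∫ p in s, F (g p) = ∫ α in Ioo (0:ℝ) l, ∫ β in Ioo (0:ℝ) a, F (g (α, β)) := by
    rw [hsdef, hvol]
    exact setIntegral_prod _ (hvol ▸ (hFGint.mono_set hsR))
  -- the direction vector and its norm bound
  have hw_norm : ∀ α ∈ Icc (0:ℝ) l, ‖pt (-(c*α)) 1‖ ≤ K := by
    intro α hα
    rw [pt_norm, hKdef]
    apply Real.sqrt_le_sqrt
    have h0 : 0 ≤ (1-lam)*α := mul_nonneg (by linarith) hα.1
    have h1 : (1-lam)*α ≤ l := le_trans (mul_le_of_le_one_left hα.1 (by linarith)) hα.2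
    have h2 : (-(c*α))^2 = ((1-lam)*α)^2/a^2 := by rw [hcdef]; field_simp
    rw [h2]
    have h3 : ((1-lam)*α)^2/a^2 ≤ l^2/a^2 := by
      gcongr
    have h4 : ((1:ℝ))^2 = 1 := one_pow 2
    linarith
  -- derivative along the oblique segments
  have hγ : ∀ α ∈ Icc (0:ℝ) l, ∀ β : ℝ,
      HasDerivAt (fun t => e (g (α, t))) (pt (-(c*α)) 1) β := by
    intro α hα β
    have heq : (fun t => e (g (α, t))) = fun t => pt α 0 + t • pt (-(c*α)) 1 := by
      funext t
      rw [pt_smul, pt_add, hedef, hgdef]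
      simp only
      congr 1 <;> ring
    rw [heq]
    simpa using ((hasDerivAt_id β).smul_const (pt (-(c*α)) 1)).const_add (pt α 0)
  have hudiff : ∀ q ∈ C, HasFDerivAt u (fderiv ℝ u q) q := fun q hq =>
    ((hu.differentiableOn one_ne_zero).differentiableAt (hU.mem_nhds (hCU hq))).hasFDerivAt
  -- endpoints
  have hga : ∀ α : ℝ, e (g (α, a)) = pt (lam*α) a := by
    intro α
    rw [hedef, hgdef]
    simp only
    congr 1
    rw [show 1 - c*a = lam by rw [hca]; ring]
  have hg0 : ∀ α : ℝ, e (g (α, 0)) = pt α 0 := by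
    intro α
    rw [hedef, hgdef]
    simp only
    congr 1
    ring
  -- FTC along the segments
  have hcont2 : ∀ α ∈ Icc (0:ℝ) l,
      ContinuousOn (fun β => (fderiv ℝ u (e (g (α, β)))) (pt (-(c*α)) 1)) (Icc 0 a) := by
    intro α hα
    exact (ContinuousLinearMap.apply ℝ ℝ (pt (-(c*α)) 1)).continuous.comp_continuousOn
      (hDu.comp ((he_cont.comp hg_cont).comp (Continuous.prodMk_right α)).continuousOn
        (fun β hβ => hCU (hmem α hα β hβ)))
  have hFTC : ∀ α ∈ Icc (0:ℝ) l,
      u (pt (lam*α) a) - u (pt α 0)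
        = ∫ β in (0:ℝ)..a, (fderiv ℝ u (e (g (α, β)))) (pt (-(c*α)) 1) := by
    intro α hα
    have hder : ∀ β ∈ uIcc (0:ℝ) a,
        HasDerivAt (fun t => u (e (g (α, t)))) ((fderiv ℝ u (e (g (α, β)))) (pt (-(c*α)) 1)) β := by
      intro β hβ
      have hβ' : β ∈ Icc (0:ℝ) a := by rwa [uIcc_of_le ha.le] at hβ
      have hmem' : e (g (α, β)) ∈ C := hegR (α, β) ⟨hα, hβ'⟩
      exact (hudiff _ hmem').comp_hasDerivAt β (hγ α hα β)
    have hint : IntervalIntegrable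
        (fun β => (fderiv ℝ u (e (g (α, β)))) (pt (-(c*α)) 1)) volume 0 a := by
      apply ContinuousOn.intervalIntegrable
      rw [uIcc_of_le ha.le]
      exact hcont2 α hα
    have h := intervalIntegral.integral_eq_sub_of_hasDerivAt hder hint
    rw [h, hga, hg0]
  -- inner estimate
  have hFgα_cont : ∀ α ∈ Icc (0:ℝ) l, ContinuousOn (fun β => F (g (α, β))) (Icc 0 a) := by
    intro α hα
    exact hFG_cont.comp (Continuous.prodMk_right α).continuousOn (fun β hβ => ⟨hα, hβ⟩)
  have hInner : ∀ α ∈ Icc (0:ℝ) l,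
      |u (pt (lam*α) a) - u (pt α 0)| ≤ K * ∫ β in Ioo (0:ℝ) a, F (g (α, β)) := by
    intro α hα
    rw [hFTC α hα, intervalIntegral.integral_of_le ha.le, integral_Ioc_eq_integral_Ioo]
    refine (abs_int_le _ _).trans ?_
    rw [← MeasureTheory.integral_const_mul]
    apply setIntegral_mono_on
    · exact (((hcont2 α hα).abs.integrableOn_compact isCompact_Icc).mono_set Ioo_subset_Icc_self)
    · exact (((hFgα_cont α hα).integrableOn_compact isCompact_Icc).mono_set
        Ioo_subset_Icc_self).const_mul K
    · exact measurableSet_Ioo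
    · intro β hβ
      have h1 : |(fderiv ℝ u (e (g (α, β)))) (pt (-(c*α)) 1)|
          ≤ ‖fderiv ℝ u (e (g (α, β)))‖ * ‖pt (-(c*α)) 1‖ := by
        rw [← Real.norm_eq_abs]
        exact ContinuousLinearMap.le_opNorm _ _
      refine h1.trans ?_
      calc ‖fderiv ℝ u (e (g (α, β)))‖ * ‖pt (-(c*α)) 1‖
          ≤ ‖fderiv ℝ u (e (g (α, β)))‖ * K :=
            mul_le_mul_of_nonneg_left (hw_norm α hα) (norm_nonneg _)
        _ = K * F (g (α, β)) := by rw [hFdef]; ring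
  -- rewrite the left-hand side
  have hLHS : (1/lam) * (∫ x in (0:ℝ)..(lam*l), u (pt x a))
      = ∫ α in (0:ℝ)..l, u (pt (lam*α) a) := by
    rw [intervalIntegral.integral_comp_mul_left (fun x => u (pt x a)) hlam0.ne']
    rw [mul_zero, smul_eq_mul, one_div]
  rw [hLHS]
  -- integrability of endpoint functions
  have hu_cont : ContinuousOn u U := hu.continuousOn
  have hmema : ∀ α ∈ Icc (0:ℝ) l, pt (lam*α) a ∈ C := by
    intro α hα
    have h := hmem α hα a ⟨ha.le, le_rfl⟩
    rwa [show (1 - c*a)*α = lam*α by rw [hca]; ring] at h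
  have hmem0 : ∀ α ∈ Icc (0:ℝ) l, pt α 0 ∈ C := by
    intro α hα
    have h := hmem α hα 0 ⟨le_rfl, ha.le⟩
    rwa [show (1 - c*0)*α = α by ring] at h
  have hca_cont : ContinuousOn (fun α : ℝ => u (pt (lam*α) a)) (Icc 0 l) := by
    apply hu_cont.comp
    · exact (cont_pt.comp ((continuous_const.mul continuous_id).prodMk continuous_const)).continuousOn
    · exact fun α hα => hCU (hmema α hα)
  have hc0_cont : ContinuousOn (fun α : ℝ => u (pt α 0)) (Icc 0 l) := by
    apply hu_cont.comp
    · exact (cont_pt.comp (continuous_id.prodMk continuous_const)).continuousOn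
    · exact fun α hα => hCU (hmem0 α hα)
  have hint1 : IntervalIntegrable (fun α : ℝ => u (pt (lam*α) a)) volume 0 l := by
    apply ContinuousOn.intervalIntegrable
    rwa [uIcc_of_le hl.le]
  have hint2 : IntervalIntegrable (fun α : ℝ => u (pt α 0)) volume 0 l := by
    apply ContinuousOn.intervalIntegrable
    rwa [uIcc_of_le hl.le]
  rw [← intervalIntegral.integral_sub hint1 hint2]
  rw [intervalIntegral.integral_of_le hl.le, integral_Ioc_eq_integral_Ioo]
  -- the inner integral as a function of α
  have hNint : IntegrableOn (fun α => ∫ β in Ioo (0:ℝ) a, F (g (α, β))) (Ioo 0 l) := by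
    have h : IntegrableOn (fun p => F (g p)) (Ioo 0 l ×ˢ Ioo 0 a) volume := by
      rw [← hsdef]; exact hFGint.mono_set hsR
    have h2 : Integrable (fun p => F (g p))
        ((volume.restrict (Ioo 0 l)).prod (volume.restrict (Ioo 0 a))) := by
      rw [Measure.prod_restrict, ← Measure.volume_eq_prod]
      exact h
    exact h2.integral_prod_left
  have hDint : IntegrableOn (fun α => |u (pt (lam*α) a) - u (pt α 0)|) (Ioo 0 l) :=
    (((hca_cont.sub hc0_cont).abs.integrableOn_compact isCompact_Icc).mono_set
      Ioo_subset_Icc_self)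
  calc |∫ α in Ioo (0:ℝ) l, (u (pt (lam*α) a) - u (pt α 0))|
      ≤ ∫ α in Ioo (0:ℝ) l, |u (pt (lam*α) a) - u (pt α 0)| := abs_int_le _ _
    _ ≤ ∫ α in Ioo (0:ℝ) l, K * ∫ β in Ioo (0:ℝ) a, F (g (α, β)) := by
        apply setIntegral_mono_on hDint (hNint.const_mul K) measurableSet_Ioo
        intro α hα
        exact hInner α (Ioo_subset_Icc_self hα)
    _ = K * ∫ p in s, F (g p) := by
        rw [MeasureTheory.integral_const_mul, hFub]
    _ ≤ K * ((1/lam) * ∫ p in C, ‖fderiv ℝ u p‖) := mul_le_mul_of_nonneg_left hkey hK0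
    _ = (K/lam) * ∫ p in C, ‖fderiv ℝ u p‖ := by ring
    _ ≤ (K/lam^2) * ∫ p in C, ‖fderiv ℝ u p‖ := by
        apply mul_le_mul_of_nonneg_right ?_ hIC_nn
        apply div_le_div_of_nonneg_left hK0 (by positivity)
        nlinarith
end
end
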